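/- arXiv:1706.05728 — 3 statements merged into one kernel-verified Lean document; each statement's English description precedes it below -/
import Mathlib

section
/- For integers n ≥ 1 and m ≥ 1, the coefficients E_{n,m} of z^n in Ein(z)^m satisfy |n! · E_{n,m}| ≤ m^n. -/
open MeasureTheory

/-- `Ein z = ∫_0^z (1 - e^{-t})/t dt`, parametrized along the segment `t = r z`. -/
noncomputable def Ein (z : ℂ) : ℂ := ∫ r in (0:ℝ)..1, (1 - Complex.exp (-((r : ℂ) * z))) / (r : ℂ)
noncomputable def EinCoeff (n m : ℕ) : ℂ :=
  iteratedDeriv n (fun z => Ein z ^ m) 0 / (n.factorial : ℂ)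

open PowerSeries intervalIntegral

/-- The formal power series of `Ein`. -/
noncomputable def EinPS : PowerSeries ℂ :=
  PowerSeries.mk fun k => if k = 0 then 0 else (-1 : ℂ) ^ (k + 1) / (k * k.factorial)

lemma coeff_exp_real (k : ℕ) : (coeff k) (exp ℝ) = 1 / k.factorial := by
  rw [PowerSeries.coeff_exp]
  simp [algebraMap]

lemma coeff_exp_pow (m n : ℕ) :
    (coeff n) (exp ℝ ^ m) = (m : ℝ) ^ n / n.factorial := by
  rw [PowerSeries.exp_pow_eq_rescale_exp, PowerSeries.coeff_rescale, coeff_exp_real]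
  ring

lemma abs_coeff_EinPS (k : ℕ) :
    ‖(coeff k) EinPS‖ ≤ (coeff k) (exp ℝ) := by
  rw [coeff_exp_real, EinPS, PowerSeries.coeff_mk]
  rcases Nat.eq_zero_or_pos k with hk | hk
  · subst hk; simp
  · rw [if_neg hk.ne', norm_div, norm_pow, norm_neg, norm_one, one_pow]
    have h1 : ‖((k : ℂ) * k.factorial)‖ = (k : ℝ) * k.factorial := by
      rw [norm_mul, Complex.norm_natCast, Complex.norm_natCast]
    rw [h1, one_div]
    have hfk : (0:ℝ) < (k.factorial : ℝ) := Nat.cast_pos.2 k.factorial_pos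
    have hk1 : (1:ℝ) ≤ (k:ℝ) := Nat.one_le_cast.2 hk
    have hle : (k.factorial : ℝ) ≤ (k:ℝ) * k.factorial := by nlinarith
    rw [one_div]
    exact inv_anti₀ hfk hle

lemma key_bound (m n : ℕ) :
    ‖(coeff n) (EinPS ^ m)‖ ≤ (coeff n) (exp ℝ ^ m) := by
  induction m generalizing n with
  | zero =>
    simp only [pow_zero, PowerSeries.coeff_one]
    split <;> simp
  | succ m ih =>
    rw [pow_succ, pow_succ, PowerSeries.coeff_mul, PowerSeries.coeff_mul]
    refine le_trans (norm_sum_le _ _) (Finset.sum_le_sum fun p _ => ?_)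
    rw [norm_mul]
    exact mul_le_mul (ih p.1) (abs_coeff_EinPS p.2) (norm_nonneg _)
      ((coeff_exp_pow m p.1 ▸ by positivity : (0:ℝ) ≤ (coeff p.1) (exp ℝ ^ m)))

lemma abs_coeff_pow_le (m n : ℕ) :
    ‖(coeff n) (EinPS ^ m)‖ ≤ (m : ℝ) ^ n / n.factorial :=
  coeff_exp_pow m n ▸ key_bound m n

lemma summable_norm_coeff (m : ℕ) (z : ℂ) :
    Summable fun n => ‖(coeff n) (EinPS ^ m) * z ^ n‖ := by
  refine Summable.of_nonneg_of_le (fun n => norm_nonneg _) (fun n => ?_)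
    (Real.summable_pow_div_factorial ((m : ℝ) * ‖z‖))
  rw [norm_mul, norm_pow]
  refine le_trans (mul_le_mul_of_nonneg_right (abs_coeff_pow_le m n) (by positivity))
    (le_of_eq ?_)
  rw [mul_pow]; ring

lemma complex_exp_tsum (w : ℂ) : Complex.exp w = ∑' n : ℕ, w ^ n / n.factorial := by
  rw [Complex.exp_eq_exp_ℂ, NormedSpace.exp_eq_tsum_div]

lemma summable_exp_div (w : ℂ) : Summable fun n : ℕ => w ^ n / (n.factorial : ℂ) :=
  NormedSpace.expSeries_div_summable w

/-- The integrand expanded as a series, for `r ≠ 0`. -/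
lemma integrand_eq (z : ℂ) {r : ℝ} (hr : r ≠ 0) :
    (1 - Complex.exp (-((r : ℂ) * z))) / (r : ℂ)
      = ∑' k : ℕ, ((-1 : ℂ) ^ k * z ^ (k + 1) / (k + 1).factorial) * (r : ℂ) ^ k := by
  have hrc : (r : ℂ) ≠ 0 := by exact_mod_cast hr
  have h1 := complex_exp_tsum (-((r : ℂ) * z))
  rw [(summable_exp_div _).tsum_eq_zero_add] at h1
  simp only [pow_zero, Nat.factorial_zero, Nat.cast_one, div_one] at h1
  have h2 : 1 - Complex.exp (-((r : ℂ) * z))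
      = ∑' k : ℕ, -((-((r : ℂ) * z)) ^ (k + 1) / ((k + 1).factorial : ℂ)) := by
    rw [tsum_neg, h1]; ring
  rw [h2, ← tsum_div_const]
  refine tsum_congr fun k => ?_
  have h3 : (-((r : ℂ) * z)) ^ (k + 1) = (-1 : ℂ) ^ (k + 1) * (r : ℂ) ^ (k + 1) * z ^ (k + 1) := by
    rw [neg_pow, mul_pow]; ring
  rw [div_eq_iff hrc, h3, pow_succ (-1 : ℂ) k, pow_succ (r : ℂ) k]
  ring

lemma ein_eq_tsum (z : ℂ) :
    Ein z = ∑' k : ℕ, (coeff k) EinPS * z ^ k := by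
  have hms : MeasurableSet (Set.Ioc (0:ℝ) 1) := measurableSet_Ioc
  set G : ℕ → ℝ → ℂ := fun k r => ((-1 : ℂ) ^ k * z ^ (k + 1) / (k + 1).factorial) * (r : ℂ) ^ k
    with hG
  have hcont : ∀ k, Continuous (G k) := fun k =>
    continuous_const.mul (Complex.continuous_ofReal.pow k)
  have hint : ∀ k, IntegrableOn (G k) (Set.Ioc (0:ℝ) 1) := fun k =>
    (hcont k).integrableOn_Ioc
  have hbound : ∀ k, (∫ r in Set.Ioc (0:ℝ) 1, ‖G k r‖)
      ≤ ‖z‖ ^ (k + 1) / (k + 1).factorial := by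
    intro k
    have hb : ∀ r ∈ Set.Ioc (0:ℝ) 1, ‖G k r‖ ≤ ‖z‖ ^ (k + 1) / (k + 1).factorial := by
      intro r hr
      have h2 : ‖G k r‖ = ‖z‖ ^ (k + 1) / (k + 1).factorial * r ^ k := by
        rw [hG]
        simp only []
        rw [norm_mul, norm_pow, Complex.norm_real, Real.norm_eq_abs, abs_of_pos hr.1]
        congr 1
        rw [norm_div, norm_mul, norm_pow, norm_pow, norm_neg, norm_one,
          one_pow, one_mul, Complex.norm_natCast]
      rw [h2]
      have hrk : r ^ k ≤ 1 := pow_le_one₀ hr.1.le hr.2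
      calc ‖z‖ ^ (k+1) / (k+1).factorial * r ^ k
          ≤ ‖z‖ ^ (k+1) / (k+1).factorial * 1 :=
            mul_le_mul_of_nonneg_left hrk (by positivity)
        _ = _ := mul_one _
    calc (∫ r in Set.Ioc (0:ℝ) 1, ‖G k r‖)
        ≤ ∫ _ in Set.Ioc (0:ℝ) 1, (‖z‖ ^ (k + 1) / (k + 1).factorial : ℝ) := by
          refine setIntegral_mono_on ((hint k).norm) (integrableOn_const ?_) hms hb
          simp [Real.volume_Ioc]
      _ = ‖z‖ ^ (k + 1) / (k + 1).factorial := by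
          simp [Real.volume_Ioc]
  have hsum : Summable fun k => ∫ r in Set.Ioc (0:ℝ) 1, ‖G k r‖ := by
    refine Summable.of_nonneg_of_le (fun k => integral_nonneg fun r => norm_nonneg _)
      hbound ?_
    exact (summable_nat_add_iff 1).2 (Real.summable_pow_div_factorial ‖z‖)
  have hswap := MeasureTheory.integral_tsum_of_summable_integral_norm
    (μ := volume.restrict (Set.Ioc (0:ℝ) 1)) hint hsum
  have hEin : Ein z = ∫ r in Set.Ioc (0:ℝ) 1, ∑' k, G k r := by
    rw [Ein, intervalIntegral.integral_of_le zero_le_one]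
    refine setIntegral_congr_fun hms fun r hr => ?_
    exact integrand_eq z (ne_of_gt hr.1)
  have hval : ∀ k, (∫ r in Set.Ioc (0:ℝ) 1, G k r)
      = (coeff (k+1)) EinPS * z ^ (k+1) := by
    intro k
    rw [hG]
    simp only []
    rw [MeasureTheory.integral_const_mul]
    have hpint : (∫ r in Set.Ioc (0:ℝ) 1, ((r : ℂ)) ^ k) = ((1 / (k + 1) : ℝ) : ℂ) := by
      rw [← intervalIntegral.integral_of_le zero_le_one]
      have h4 : (fun r : ℝ => ((r:ℂ)) ^ k) = fun r : ℝ => ((r ^ k : ℝ) : ℂ) := by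
        funext r; push_cast; ring
      rw [h4, intervalIntegral.integral_ofReal, integral_pow]
      norm_num
    have hpow : (-1 : ℂ) ^ (k + 1 + 1) = (-1) ^ k := by
      rw [pow_succ, pow_succ]; ring
    rw [hpint, EinPS, PowerSeries.coeff_mk, if_neg (Nat.succ_ne_zero k), hpow]
    have hc1 : ((k:ℂ) + 1) ≠ 0 := Nat.cast_add_one_ne_zero k
    have hc2 : (((k+1).factorial : ℂ)) ≠ 0 := Nat.cast_ne_zero.2 (k+1).factorial_ne_zero
    push_cast
    field_simp
  have hsum2 : Summable fun k => (coeff k) EinPS * z ^ k := by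
    have := (summable_norm_coeff 1 z).of_norm
    simpa [pow_one] using this
  rw [hEin, ← hswap, hsum2.tsum_eq_zero_add]
  have hc0 : (coeff 0) EinPS = 0 := by rw [EinPS, PowerSeries.coeff_mk]; simp
  rw [hc0, zero_mul, zero_add]
  exact tsum_congr hval

lemma ein_pow_eq_tsum (m : ℕ) (z : ℂ) :
    Ein z ^ m = ∑' k : ℕ, (coeff k) (EinPS ^ m) * z ^ k := by
  induction m with
  | zero =>
    rw [pow_zero, pow_zero]
    rw [tsum_eq_single 0 (fun n hn => by
      rw [PowerSeries.coeff_one, if_neg hn, zero_mul])]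
    simp
  | succ m ih =>
    rw [pow_succ, ih, ein_eq_tsum z,
      tsum_mul_tsum_eq_tsum_sum_antidiagonal_of_summable_norm
        (summable_norm_coeff m z) (by simpa [pow_one] using summable_norm_coeff 1 z)]
    refine tsum_congr fun n => ?_
    rw [pow_succ, PowerSeries.coeff_mul, Finset.sum_mul]
    refine Finset.sum_congr rfl fun p hp => ?_
    have hpn : p.1 + p.2 = n := Finset.HasAntidiagonal.mem_antidiagonal.1 hp
    rw [← hpn, pow_add]
    ring

theorem stmt_2 (n m : ℕ) (hn : 1 ≤ n) (hm : 1 ≤ m) :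
    ‖(n.factorial : ℂ) * EinCoeff n m‖ ≤ (m : ℝ) ^ n := by
  classical
  set c : ℕ → ℂ := fun k => (coeff k) (EinPS ^ m) with hc
  set p : FormalMultilinearSeries ℂ ℂ ℂ := FormalMultilinearSeries.ofScalars ℂ c with hp
  have hrad : p.radius = ⊤ := by
    refine p.radius_eq_top_of_summable_norm fun r => ?_
    refine Summable.of_nonneg_of_le (fun k => by positivity) (fun k => ?_)
      (Real.summable_pow_div_factorial ((m : ℝ) * r))
    calc ‖p k‖ * (r:ℝ) ^ k = ‖c k‖ * (r:ℝ) ^ k := by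
          rw [hp, FormalMultilinearSeries.ofScalars_norm]
      _ ≤ ((m:ℝ)^k / k.factorial) * r ^ k :=
          mul_le_mul_of_nonneg_right (abs_coeff_pow_le m k) (by positivity)
      _ = ((m:ℝ) * r) ^ k / k.factorial := by rw [mul_pow]; ring
  have hball : HasFPowerSeriesOnBall p.sum p 0 p.radius :=
    p.hasFPowerSeriesOnBall (by rw [hrad]; exact ENNReal.zero_lt_top)
  have hsumeq : p.sum = fun z => Ein z ^ m := by
    funext z
    have h1 : p.sum z = ∑' k, c k • z ^ k := FormalMultilinearSeries.ofScalars_sum_eq c z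
    rw [h1, ein_pow_eq_tsum m z]
    exact tsum_congr fun k => by rw [smul_eq_mul]
  rw [hsumeq] at hball
  have hfact := hball.factorial_smul (1 : ℂ) n
  have happ : p n (fun _ => (1:ℂ)) = c n := by
    rw [hp, FormalMultilinearSeries.ofScalars_apply_eq, one_pow, smul_eq_mul, mul_one]
  rw [happ] at hfact
  have hderiv : iteratedDeriv n (fun z => Ein z ^ m) 0 = (n.factorial : ℂ) * c n := by
    rw [iteratedDeriv_eq_iteratedFDeriv, ← hfact, nsmul_eq_mul]
  have hne : (n.factorial : ℂ) ≠ 0 := Nat.cast_ne_zero.2 n.factorial_ne_zero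
  rw [EinCoeff, hderiv, mul_div_cancel_left₀ _ hne, norm_mul, Complex.norm_natCast]
  calc (n.factorial : ℝ) * ‖c n‖
      ≤ (n.factorial : ℝ) * ((m:ℝ)^n / n.factorial) :=
        mul_le_mul_of_nonneg_left (abs_coeff_pow_le m n) (by positivity)
    _ = (m:ℝ)^n := by
        field_simp
end

section
/- For an integer κ ≥ 1, define C_{r,κ} as the r-th Taylor coefficient at 0 of e^{γz}/Γ(κ+1−z). Then for every r ≥ 0, C_{r,κ} = ∑_{j=0}^{r} C_{j,κ−1} / κ^{r−j+1}. -/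
open Complex

/-- `C r κ` is the `r`-th Taylor coefficient at `0` of `e^{γz}/Γ(κ+1-z)`. -/
noncomputable def genDickmanC (r κ : ℕ) : ℂ :=
  iteratedDeriv r (fun z => Complex.exp ((Real.eulerMascheroniConstant : ℂ) * z) /
    Complex.Gamma ((κ : ℂ) + 1 - z)) 0 / (r.factorial : ℂ)

private lemma gd_leibniz {h : ℂ → ℂ} (hh : ContDiff ℂ ⊤ h) (c : ℂ) (n : ℕ) :
    iteratedDeriv n (fun z => (c - z) * h z) =
      fun z => (c - z) * iteratedDeriv n h z - n * iteratedDeriv (n - 1) h z := by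
  have hD : ∀ m : ℕ, Differentiable ℂ (iteratedDeriv m h) := fun m =>
    hh.differentiable_iteratedDeriv m (by simp)
  induction n with
  | zero => simp
  | succ n ih =>
    rw [iteratedDeriv_succ, ih]
    funext z
    have h1 : HasDerivAt (fun z : ℂ => (c - z) * iteratedDeriv n h z)
        (-1 * iteratedDeriv n h z + (c - z) * deriv (iteratedDeriv n h) z) z :=
      ((hasDerivAt_id z).const_sub c).mul (hD n z).hasDerivAt
    have h2 : HasDerivAt (fun z : ℂ => (n : ℂ) * iteratedDeriv (n - 1) h z)
        ((n : ℂ) * deriv (iteratedDeriv (n - 1) h) z) z :=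
      (hD (n - 1) z).hasDerivAt.const_mul _
    have h3 : HasDerivAt (fun z => (c - z) * iteratedDeriv n h z - (n : ℂ) * iteratedDeriv (n - 1) h z) _ z := h1.sub h2
    rw [h3.deriv]
    cases n with
    | zero => simp [← iteratedDeriv_succ]; ring
    | succ m =>
      simp only [Nat.add_sub_cancel, ← iteratedDeriv_succ]
      push_cast
      ring

private lemma gd_contDiff (κ : ℕ) :
    ContDiff ℂ ⊤ (fun z => Complex.exp ((Real.eulerMascheroniConstant : ℂ) * z) /
      Complex.Gamma ((κ : ℂ) + 1 - z)) := by
  apply Differentiable.contDiff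
  have : (fun z : ℂ => Complex.exp ((Real.eulerMascheroniConstant : ℂ) * z) /
      Complex.Gamma ((κ : ℂ) + 1 - z)) = fun z =>
      Complex.exp ((Real.eulerMascheroniConstant : ℂ) * z) *
      (Complex.Gamma ((κ : ℂ) + 1 - z))⁻¹ := by
    funext z; rw [div_eq_mul_inv]
  rw [this]
  exact (Complex.differentiable_exp.comp ((differentiable_const _).mul differentiable_id)).mul
    (Complex.differentiable_one_div_Gamma.comp ((differentiable_const _).sub differentiable_id))

private lemma gd_funeq (κ : ℕ) (hκ : 1 ≤ κ) :
    (fun z => Complex.exp ((Real.eulerMascheroniConstant : ℂ) * z) /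
      Complex.Gamma (((κ - 1 : ℕ) : ℂ) + 1 - z)) =
    fun z => ((κ : ℂ) - z) * (Complex.exp ((Real.eulerMascheroniConstant : ℂ) * z) /
      Complex.Gamma ((κ : ℂ) + 1 - z)) := by
  funext z
  have hc : ((κ - 1 : ℕ) : ℂ) + 1 - z = (κ : ℂ) - z := by
    rw [Nat.cast_sub hκ]; ring
  rw [hc]
  set s : ℂ := (κ : ℂ) - z with hs
  have h1 : (κ : ℂ) + 1 - z = s + 1 := by rw [hs]; ring
  rw [h1]
  by_cases h0 : s = 0
  · simp [h0, Complex.Gamma_zero]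
  · rw [Complex.Gamma_add_one s h0, mul_div_assoc', mul_div_mul_left _ _ h0]

private lemma gd_rec (κ : ℕ) (hκ : 1 ≤ κ) (r : ℕ) :
    genDickmanC r (κ - 1) =
      (κ : ℂ) * genDickmanC r κ - r * genDickmanC (r - 1) κ * (r - 1).factorial / r.factorial := by
  unfold genDickmanC
  rw [gd_funeq κ hκ, gd_leibniz (gd_contDiff κ) ((κ : ℂ)) r]
  have hfac : (r.factorial : ℂ) ≠ 0 := Nat.cast_ne_zero.mpr r.factorial_ne_zero
  have hfac' : ((r - 1).factorial : ℂ) ≠ 0 := Nat.cast_ne_zero.mpr (r - 1).factorial_ne_zero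
  field_simp
  rw [sub_zero]

private lemma gd_rec' (κ : ℕ) (hκ : 1 ≤ κ) (r : ℕ) :
    genDickmanC (r + 1) (κ - 1) = (κ : ℂ) * genDickmanC (r + 1) κ - genDickmanC r κ := by
  rw [gd_rec κ hκ (r + 1)]
  have h : ((r + 1 : ℕ) : ℂ) * genDickmanC r κ * (r.factorial : ℂ) / ((r + 1).factorial : ℂ)
      = genDickmanC r κ := by
    rw [Nat.factorial_succ]
    have hfac : (r.factorial : ℂ) ≠ 0 := Nat.cast_ne_zero.mpr r.factorial_ne_zero
    have h1 : ((r : ℂ) + 1) ≠ 0 := Nat.cast_add_one_ne_zero r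
    push_cast
    field_simp
  simp only [Nat.add_sub_cancel]
  rw [h]

private lemma gd_rec0 (κ : ℕ) (hκ : 1 ≤ κ) :
    genDickmanC 0 (κ - 1) = (κ : ℂ) * genDickmanC 0 κ := by
  have := gd_rec κ hκ 0
  simpa using this

theorem stmt_7 (κ : ℕ) (hκ : 1 ≤ κ) (r : ℕ) :
    genDickmanC r κ = ∑ j ∈ Finset.range (r + 1), genDickmanC j (κ - 1) / (κ : ℂ) ^ (r - j + 1) := by
  have hκ0 : (κ : ℂ) ≠ 0 := Nat.cast_ne_zero.mpr (by omega)
  induction r with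
  | zero =>
    rw [Finset.sum_range_one]
    simp only [Nat.sub_self, zero_add, pow_one]
    rw [gd_rec0 κ hκ]
    field_simp
  | succ r ih =>
    rw [Finset.sum_range_succ]
    have hsum : ∑ j ∈ Finset.range (r + 1), genDickmanC j (κ - 1) / (κ : ℂ) ^ (r + 1 - j + 1)
        = (∑ j ∈ Finset.range (r + 1), genDickmanC j (κ - 1) / (κ : ℂ) ^ (r - j + 1)) / κ := by
      rw [Finset.sum_div]
      apply Finset.sum_congr rfl
      intro j hj
      have hjr : j ≤ r := by simpa [Nat.lt_succ_iff] using hj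
      have : r + 1 - j + 1 = (r - j + 1) + 1 := by omega
      rw [this, pow_succ, div_div]
    rw [hsum, ← ih]
    have hrec := gd_rec' κ hκ r
    have : r + 1 - (r + 1) + 1 = 1 := by omega
    rw [this, pow_one]
    rw [hrec]
    field_simp
    ring
end

section
/- For ℓ ≥ 1 and u ≥ ℓ, the iterated integral u^κ ∫_ℓ^u ∫_{ℓ−1}^{t_ℓ−1} ⋯ ∫_1^{t_2−1} ∏_{i=1}^ℓ (t_i − 1)^κ dt_1/t_1^{κ+1} ⋯ dt_ℓ/t_ℓ^{κ+1} equals the symmetric multiple integral (1/ℓ!) ∫_{s_1,…,s_ℓ ≥ 1, s_1+⋯+s_ℓ ≤ u} (u − (s_1+⋯+s_ℓ))^κ ds_1/s_1 ⋯ ds_ℓ/s_ℓ. -/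
set_option maxHeartbeats 1000000

open MeasureTheory

/-- The multiple integral `K_ℓ(u,κ)`, with the empty (`ℓ = 0`) case giving `u^κ` for `u ≥ 0`. -/
noncomputable def K (ℓ : ℕ) (u κ : ℝ) : ℝ :=
  (1 / (ℓ.factorial : ℝ)) *
    ∫ t in {t : Fin ℓ → ℝ | (∀ i, 1 ≤ t i) ∧ ∑ i, t i ≤ u}, (u - ∑ i, t i) ^ κ / ∏ i, t i

/-- The iterated integral `J ℓ u κ = ∫_ℓ^u (t-1)^κ t^{-κ-1} (J (ℓ-1) (t-1) κ) dt`. -/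
noncomputable def J : ℕ → ℝ → ℝ → ℝ
  | 0, _, _ => 1
  | (n + 1), u, κ => ∫ t in ((n : ℝ) + 1)..u, (t - 1) ^ κ / t ^ (κ + 1) * J n (t - 1) κ

namespace Stmt11

open Set Module Pointwise

variable {n : ℕ} {u κ t : ℝ}

/-- The integrand of `K`. -/
noncomputable def F (n : ℕ) (u κ : ℝ) (σ : Fin n → ℝ) : ℝ := (u - ∑ i, σ i) ^ κ / ∏ i, σ i

/-- The domain of integration of `K`. -/
def A (n : ℕ) (u : ℝ) : Set (Fin n → ℝ) := {σ | (∀ i, 1 ≤ σ i) ∧ ∑ i, σ i ≤ u}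

/-- The part of `A` where coordinate `j` is the strict minimum. -/
def T (n : ℕ) (u : ℝ) (j : Fin n) : Set (Fin n → ℝ) :=
  {σ | σ ∈ A n u ∧ ∀ i, i ≠ j → σ j < σ i}

/-- The part of `A` where the last coordinate is minimal. -/
def M (n : ℕ) (u : ℝ) : Set (Fin (n + 1) → ℝ) :=
  {σ | σ ∈ A (n + 1) u ∧ ∀ i, σ (Fin.last n) ≤ σ i}

/-- The inner slice domain. -/
def B (n : ℕ) (u t : ℝ) : Set (Fin n → ℝ) := {σ | (∀ i, t ≤ σ i) ∧ t + ∑ i, σ i ≤ u}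

/-- `M` after splitting off the last coordinate. -/
def D (n : ℕ) (u : ℝ) : Set (ℝ × (Fin n → ℝ)) := {p | 1 ≤ p.1 ∧ p.2 ∈ B n u p.1}

/-- The integrand on the product space. -/
noncomputable def g (n : ℕ) (u κ : ℝ) (p : ℝ × (Fin n → ℝ)) : ℝ :=
  (u - (p.1 + ∑ i, p.2 i)) ^ κ / (p.1 * ∏ i, p.2 i)

lemma K_eq (n : ℕ) (u κ : ℝ) :
    K n u κ = ((n.factorial : ℝ))⁻¹ * ∫ σ in A n u, F n u κ σ := by
  rw [K, one_div]; rfl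

lemma measurable_F : Measurable (F n u κ) := by
  unfold F; fun_prop

lemma measurable_g : Measurable (g n u κ) := by
  unfold g; fun_prop

lemma measurableSet_A : MeasurableSet (A n u) := by
  have : A n u = (⋂ i, {σ : Fin n → ℝ | 1 ≤ σ i}) ∩ {σ | ∑ i, σ i ≤ u} := by
    ext σ; simp [A]
  rw [this]
  exact (MeasurableSet.iInter fun i =>
      measurableSet_le measurable_const (measurable_pi_apply i)).inter
    (measurableSet_le (by fun_prop) measurable_const)

lemma measurableSet_B : MeasurableSet (B n u t) := by
  have : B n u t = (⋂ i, {σ : Fin n → ℝ | t ≤ σ i}) ∩ {σ | t + ∑ i, σ i ≤ u} := by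
    ext σ; simp [B]
  rw [this]
  exact (MeasurableSet.iInter fun i =>
      measurableSet_le measurable_const (measurable_pi_apply i)).inter
    (measurableSet_le (by fun_prop) measurable_const)

lemma measurableSet_T (j : Fin n) : MeasurableSet (T n u j) := by
  have : T n u j = A n u ∩ ⋂ i, ⋂ (_ : i ≠ j), {σ : Fin n → ℝ | σ j < σ i} := by
    ext σ; simp [T]
  rw [this]
  exact measurableSet_A.inter <| .iInter fun i => .iInter fun _ =>
    measurableSet_lt (measurable_pi_apply j) (measurable_pi_apply i)

lemma measurableSet_M : MeasurableSet (M n u) := by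
  have : M n u = A (n + 1) u ∩ ⋂ i, {σ : Fin (n + 1) → ℝ | σ (Fin.last n) ≤ σ i} := by
    ext σ; simp [M]
  rw [this]
  exact measurableSet_A.inter <| .iInter fun i =>
    measurableSet_le (measurable_pi_apply _) (measurable_pi_apply i)

lemma measurableSet_D : MeasurableSet (D n u) := by
  have : D n u = ({p : ℝ × (Fin n → ℝ) | 1 ≤ p.1} ∩
      ((⋂ i, {p : ℝ × (Fin n → ℝ) | p.1 ≤ p.2 i}) ∩ {p | p.1 + ∑ i, p.2 i ≤ u})) := by
    ext p; simp [D, B, and_assoc]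
  rw [this]
  refine (measurableSet_le measurable_const measurable_fst).inter
    ((MeasurableSet.iInter fun i => measurableSet_le measurable_fst (by fun_prop)).inter
      (measurableSet_le (by fun_prop) measurable_const))

lemma A_coord_le {σ : Fin n → ℝ} (hσ : σ ∈ A n u) (i : Fin n) : σ i ≤ u := by
  obtain ⟨h1, hs⟩ := hσ
  have h0 : ∀ j ∈ Finset.univ, 0 ≤ σ j := fun j _ => le_trans zero_le_one (h1 j)
  have := Finset.single_le_sum h0 (Finset.mem_univ i)
  linarith

lemma one_le_prod {σ : Fin n → ℝ} (h1 : ∀ i, 1 ≤ σ i) : 1 ≤ ∏ i, σ i := by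
  simpa using Finset.prod_le_prod (fun i _ => zero_le_one) (fun i _ => h1 i)

lemma norm_F_le (hκ : 0 ≤ κ) {σ : Fin n → ℝ} (hσ : σ ∈ A n u) : ‖F n u κ σ‖ ≤ u ^ κ := by
  obtain ⟨h1, hs⟩ := hσ
  have hsum0 : 0 ≤ ∑ i, σ i := Finset.sum_nonneg fun i _ => le_trans zero_le_one (h1 i)
  have hp1 : 1 ≤ ∏ i, σ i := one_le_prod h1
  have hnum : (u - ∑ i, σ i) ^ κ ≤ u ^ κ :=
    Real.rpow_le_rpow (by linarith) (by linarith) hκ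
  have hnn : 0 ≤ (u - ∑ i, σ i) ^ κ := Real.rpow_nonneg (by linarith) κ
  rw [F, Real.norm_eq_abs, abs_of_nonneg (div_nonneg hnn (by linarith))]
  calc (u - ∑ i, σ i) ^ κ / ∏ i, σ i ≤ (u - ∑ i, σ i) ^ κ := div_le_self hnn hp1
    _ ≤ u ^ κ := hnum

lemma volume_A_lt_top : volume (A n u) < ⊤ := by
  have hsub : A n u ⊆ univ.pi fun _ : Fin n => Icc (1:ℝ) u := fun σ hσ =>
    Set.mem_pi.mpr fun i _ => ⟨hσ.1 i, A_coord_le hσ i⟩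
  refine lt_of_le_of_lt (measure_mono hsub) ?_
  rw [volume_pi_pi]
  exact ENNReal.prod_lt_top fun i _ => measure_Icc_lt_top

lemma integrableOn_F (hκ : 0 ≤ κ) : IntegrableOn (F n u κ) (A n u) := by
  refine Measure.integrableOn_of_bounded (M := u ^ κ) volume_A_lt_top.ne
    measurable_F.aestronglyMeasurable ?_
  exact (ae_restrict_iff' measurableSet_A).2 (Filter.Eventually.of_forall
    fun σ hσ => norm_F_le hκ hσ)

lemma tie_null {m : ℕ} {i j : Fin m} (hij : i ≠ j) :
    volume {σ : Fin m → ℝ | σ i = σ j} = 0 := by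
  set L : (Fin m → ℝ) →ₗ[ℝ] ℝ := (LinearMap.proj i : (Fin m → ℝ) →ₗ[ℝ] ℝ) - LinearMap.proj j with hL
  have hset : {σ : Fin m → ℝ | σ i = σ j} = (LinearMap.ker L : Set (Fin m → ℝ)) := by
    ext σ
    simp [hL, LinearMap.mem_ker, sub_eq_zero]
  rw [hset]
  refine Measure.addHaar_submodule _ _ (fun htop => ?_)
  have h1 : (Pi.single i 1 : Fin m → ℝ) ∈ LinearMap.ker L := htop ▸ Submodule.mem_top
  rw [LinearMap.mem_ker] at h1
  simp [hL, Pi.single_eq_same, Pi.single_eq_of_ne (Ne.symm hij)] at h1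

lemma perm_integral {m : ℕ} (e : Fin m ≃ Fin m) (s : Set (Fin m → ℝ)) (f : (Fin m → ℝ) → ℝ) :
    ∫ σ in (fun σ : Fin m → ℝ => σ ∘ e) ⁻¹' s, f (σ ∘ e) = ∫ σ in s, f σ := by
  have hmp : MeasurePreserving
      (MeasurableEquiv.arrowCongr' e.symm (MeasurableEquiv.refl ℝ))
      (volume : Measure (Fin m → ℝ)) volume :=
    volume_preserving_arrowCongr' _ _ ⟨measurable_id, Measure.map_id⟩
  have happ : ∀ σ : Fin m → ℝ,
      (MeasurableEquiv.arrowCongr' e.symm (MeasurableEquiv.refl ℝ)) σ = σ ∘ e := by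
    intro σ; rfl
  have hfun : ⇑(MeasurableEquiv.arrowCongr' e.symm (MeasurableEquiv.refl ℝ)) =
      fun σ : Fin m → ℝ => σ ∘ e := funext happ
  have := hmp.setIntegral_preimage_emb
    (MeasurableEquiv.arrowCongr' e.symm (MeasurableEquiv.refl ℝ)).measurableEmbedding f s
  simpa only [hfun] using this

lemma null_ties {m : ℕ} :
    volume (⋃ (i : Fin m) (j : Fin m) (_ : i ≠ j), {σ : Fin m → ℝ | σ i = σ j}) = 0 :=
  measure_iUnion_null fun i => measure_iUnion_null fun j =>
    measure_iUnion_null fun hij => tie_null hij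

lemma T_subset_A {j : Fin n} : T n u j ⊆ A n u := fun _ hσ => hσ.1

lemma T_swap (j : Fin (n + 1)) :
    (fun σ : Fin (n+1) → ℝ => σ ∘ Equiv.swap (Fin.last n) j) ⁻¹' (T (n+1) u (Fin.last n))
      = T (n+1) u j := by
  set e := Equiv.swap (Fin.last n) j with he
  have helast : e (Fin.last n) = j := Equiv.swap_apply_left _ _
  have hee : ∀ i, e (e i) = i := fun i => Equiv.swap_apply_self _ _ _
  ext σ
  simp only [Set.mem_preimage, T, A, Set.mem_setOf_eq, Function.comp_apply]
  rw [Equiv.sum_comp e σ]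
  constructor
  · rintro ⟨⟨h1, hs⟩, hmin⟩
    refine ⟨⟨fun i => ?_, hs⟩, fun i hij => ?_⟩
    · have := h1 (e i); rwa [hee] at this
    · have hne : e i ≠ Fin.last n := by
        intro h
        apply hij
        have := congrArg e h
        rwa [hee, helast] at this
      have := hmin (e i) hne
      rwa [helast, hee] at this
  · rintro ⟨⟨h1, hs⟩, hmin⟩
    refine ⟨⟨fun i => h1 _, hs⟩, fun i hil => ?_⟩
    rw [helast]
    refine hmin (e i) fun h => hil ?_
    have := congrArg e h
    rwa [hee, ← helast, hee] at this

lemma F_swap (e : Fin (n+1) ≃ Fin (n+1)) (σ : Fin (n+1) → ℝ) :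
    F (n+1) u κ (σ ∘ e) = F (n+1) u κ σ := by
  show (u - ∑ i, σ (e i)) ^ κ / ∏ i, σ (e i) = _
  rw [Equiv.sum_comp e σ, Equiv.prod_comp e σ]
  rfl

lemma sym (hκ : 0 ≤ κ) :
    ∫ σ in A (n + 1) u, F (n + 1) u κ σ = (n + 1 : ℝ) * ∫ σ in M n u, F (n + 1) u κ σ := by
  set ties := ⋃ (i : Fin (n+1)) (j : Fin (n+1)) (_ : i ≠ j),
    {σ : Fin (n+1) → ℝ | σ i = σ j} with hties
  have mem_ties : ∀ {σ : Fin (n+1) → ℝ} {i j : Fin (n+1)}, i ≠ j → σ i = σ j → σ ∈ ties := by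
    intro σ i j hij hσ
    exact Set.mem_iUnion.2 ⟨i, Set.mem_iUnion.2 ⟨j, Set.mem_iUnion.2 ⟨hij, hσ⟩⟩⟩
  -- step 1 : A =ᵐ ⋃ j, T j
  have hsubA : (⋃ j, T (n+1) u j) ⊆ A (n+1) u := Set.iUnion_subset fun j => T_subset_A
  have hAdiff : A (n+1) u \ (⋃ j, T (n+1) u j) ⊆ ties := by
    rintro σ ⟨hσA, hσU⟩
    obtain ⟨j, -, hj⟩ := Finset.exists_min_image Finset.univ σ Finset.univ_nonempty
    have : σ ∉ T (n+1) u j := fun h => hσU (Set.mem_iUnion.2 ⟨j, h⟩)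
    simp only [T, Set.mem_setOf_eq, hσA, true_and, not_forall] at this
    obtain ⟨i, hij, hle⟩ := this
    push_neg at hle
    exact mem_ties (Ne.symm hij) (le_antisymm (hj i (Finset.mem_univ i)) hle)
  have hae1 : A (n+1) u =ᵐ[volume] ⋃ j, T (n+1) u j := by
    apply MeasureTheory.ae_eq_set.2
    constructor
    · exact measure_mono_null hAdiff null_ties
    · rw [Set.diff_eq_empty.2 hsubA]; exact measure_empty
  -- step 2 : T last =ᵐ M
  have hTM : T (n+1) u (Fin.last n) ⊆ M n u := by
    rintro σ ⟨hA, hmin⟩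
    refine ⟨hA, fun i => ?_⟩
    rcases eq_or_ne i (Fin.last n) with rfl | h
    · exact le_refl _
    · exact le_of_lt (hmin i h)
  have hMdiff : M n u \ T (n+1) u (Fin.last n) ⊆ ties := by
    rintro σ ⟨⟨hσA, hmin⟩, hσT⟩
    simp only [T, Set.mem_setOf_eq, hσA, true_and, not_forall] at hσT
    obtain ⟨i, hil, hle⟩ := hσT
    push_neg at hle
    exact mem_ties (Ne.symm hil) (le_antisymm (hmin i) hle)
  have hae2 : T (n+1) u (Fin.last n) =ᵐ[volume] M n u := by
    apply MeasureTheory.ae_eq_set.2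
    constructor
    · rw [Set.diff_eq_empty.2 hTM]; exact measure_empty
    · exact measure_mono_null hMdiff null_ties
  -- step 3 : decompose
  have hdisj : ((Finset.univ : Finset (Fin (n+1))) : Set (Fin (n+1))).Pairwise (Function.onFun Disjoint (T (n+1) u)) := by
    intro i _ j _ hij
    refine Set.disjoint_left.2 fun σ hi hj => ?_
    exact lt_asymm (hi.2 j (Ne.symm hij)) (hj.2 i hij)
  have hsplit : ∫ σ in A (n+1) u, F (n+1) u κ σ
      = ∑ j : Fin (n+1), ∫ σ in T (n+1) u j, F (n+1) u κ σ := by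
    rw [setIntegral_congr_set hae1,
      show (⋃ j, T (n+1) u j) = ⋃ j ∈ (Finset.univ : Finset (Fin (n+1))), T (n+1) u j by simp]
    exact integral_biUnion_finset Finset.univ (fun j _ => measurableSet_T j)
      hdisj (fun j _ => (integrableOn_F hκ).mono_set T_subset_A)
  -- step 4 : each piece equals the last piece
  have hperm : ∀ j : Fin (n+1), ∫ σ in T (n+1) u j, F (n+1) u κ σ
      = ∫ σ in T (n+1) u (Fin.last n), F (n+1) u κ σ := by
    intro j
    have := perm_integral (Equiv.swap (Fin.last n) j) (T (n+1) u (Fin.last n)) (F (n+1) u κ)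
    rw [T_swap j] at this
    rw [← this]
    exact setIntegral_congr_fun (measurableSet_T j) fun σ _ => (F_swap _ σ).symm
  rw [hsplit]
  simp only [hperm]
  rw [Finset.sum_const, Finset.card_univ, Fintype.card_fin, nsmul_eq_mul,
    setIntegral_congr_set hae2]
  push_cast
  ring

lemma split_sum (σ : Fin (n+1) → ℝ) :
    ∑ i, σ i = σ (Fin.last n) + ∑ j : Fin n, σ ((Fin.last n).succAbove j) :=
  Fin.sum_univ_succAbove σ (Fin.last n)

lemma split_prod (σ : Fin (n+1) → ℝ) :
    ∏ i, σ i = σ (Fin.last n) * ∏ j : Fin n, σ ((Fin.last n).succAbove j) :=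
  Fin.prod_univ_succAbove σ (Fin.last n)

lemma D_to_M : ∫ p in D n u, g n u κ p = ∫ σ in M n u, F (n + 1) u κ σ := by
  set φ := MeasurableEquiv.piFinSuccAbove (fun _ : Fin (n+1) => ℝ) (Fin.last n) with hφ
  have hmp : MeasurePreserving φ volume volume :=
    MeasureTheory.volume_preserving_piFinSuccAbove (fun _ : Fin (n+1) => ℝ) (Fin.last n)
  have key := hmp.setIntegral_preimage_emb φ.measurableEmbedding (g n u κ) (D n u)
  have happly : ∀ σ : Fin (n+1) → ℝ,
      φ σ = (σ (Fin.last n), fun j : Fin n => σ ((Fin.last n).succAbove j)) := fun σ => rfl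
  have hpre : φ ⁻¹' (D n u) = M n u := by
    ext σ
    simp only [Set.mem_preimage, happly, D, B, M, A, Set.mem_setOf_eq]
    constructor
    · rintro ⟨h1, h2, h3⟩
      have hall1 : ∀ i, 1 ≤ σ i :=
        (Fin.forall_iff_succAbove (Fin.last n)).2 ⟨h1, fun j => le_trans h1 (h2 j)⟩
      have hmin : ∀ i, σ (Fin.last n) ≤ σ i :=
        (Fin.forall_iff_succAbove (Fin.last n)).2 ⟨le_refl _, fun j => h2 j⟩
      exact ⟨⟨hall1, by rw [split_sum σ]; exact h3⟩, hmin⟩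
    · rintro ⟨⟨h1, h2⟩, h3⟩
      exact ⟨h1 _, fun j => h3 _, by rw [← split_sum σ]; exact h2⟩
  have hg : ∀ σ : Fin (n+1) → ℝ, g n u κ (φ σ) = F (n + 1) u κ σ := by
    intro σ
    rw [happly]
    show (u - (σ (Fin.last n) + ∑ j : Fin n, σ ((Fin.last n).succAbove j))) ^ κ /
      (σ (Fin.last n) * ∏ j : Fin n, σ ((Fin.last n).succAbove j)) = _
    rw [F, ← split_sum σ, ← split_prod σ]
  rw [← key, hpre]
  exact setIntegral_congr_fun measurableSet_M fun σ _ => hg σ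

lemma D_subset : D n u ⊆ Icc (1:ℝ) u ×ˢ A n u := by
  rintro ⟨t, σ⟩ ⟨h1, h2, h3⟩
  have hσ0 : 0 ≤ ∑ i, σ i := Finset.sum_nonneg fun i _ => le_trans (by linarith) (h2 i)
  refine ⟨⟨h1, by linarith⟩, fun i => le_trans h1 (h2 i), by linarith⟩

lemma norm_g_le (hκ : 0 ≤ κ) {p : ℝ × (Fin n → ℝ)} (hp : p ∈ D n u) : ‖g n u κ p‖ ≤ u ^ κ := by
  obtain ⟨h1, h2, h3⟩ := hp
  have hp1 : 1 ≤ ∏ i, p.2 i := one_le_prod fun i => le_trans h1 (h2 i)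
  have hs0 : 0 ≤ ∑ i, p.2 i := Finset.sum_nonneg fun i _ => le_trans (by linarith) (h2 i)
  have hd1 : 1 ≤ p.1 * ∏ i, p.2 i := by nlinarith
  have hnum : (u - (p.1 + ∑ i, p.2 i)) ^ κ ≤ u ^ κ :=
    Real.rpow_le_rpow (by linarith) (by linarith) hκ
  have hnn : 0 ≤ (u - (p.1 + ∑ i, p.2 i)) ^ κ := Real.rpow_nonneg (by linarith) κ
  rw [g, Real.norm_eq_abs, abs_of_nonneg (div_nonneg hnn (by linarith))]
  calc (u - (p.1 + ∑ i, p.2 i)) ^ κ / (p.1 * ∏ i, p.2 i)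
      ≤ (u - (p.1 + ∑ i, p.2 i)) ^ κ := div_le_self hnn hd1
    _ ≤ u ^ κ := hnum

lemma integrable_indicator_g (hκ : 0 ≤ κ) :
    Integrable ((D n u).indicator (g n u κ)) (volume : Measure (ℝ × (Fin n → ℝ))) := by
  rw [integrable_indicator_iff measurableSet_D]
  refine Measure.integrableOn_of_bounded (M := u ^ κ) ?_ measurable_g.aestronglyMeasurable ?_
  · refine ((measure_mono D_subset).trans_lt ?_).ne
    rw [Measure.volume_eq_prod, Measure.prod_prod]
    exact ENNReal.mul_lt_top measure_Icc_lt_top volume_A_lt_top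
  · exact (ae_restrict_iff' measurableSet_D).2 (Filter.Eventually.of_forall
      fun p hp => norm_g_le hκ hp)

lemma B_empty (hc : u / (n+1) < t) (h1 : 1 ≤ t) : B n u t = ∅ := by
  have ht0 : 0 < t := lt_of_lt_of_le zero_lt_one h1
  ext σ
  simp only [B, Set.mem_setOf_eq, Set.mem_empty_iff_false, iff_false, not_and]
  intro h2
  have hsum : (n : ℝ) * t ≤ ∑ i, σ i := by
    calc (n : ℝ) * t = ∑ _i : Fin n, t := by rw [Finset.sum_const]; simp [mul_comm]
      _ ≤ ∑ i, σ i := Finset.sum_le_sum fun i _ => h2 i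
  have : u < (n + 1 : ℝ) * t := by
    rw [div_lt_iff₀ (by positivity)] at hc
    linarith
  intro h3
  linarith

lemma fubini (hκ : 0 ≤ κ) (hc1 : 1 ≤ u / (n+1)) :
    ∫ p in D n u, g n u κ p
      = ∫ t in Ioo (1:ℝ) (u / (n+1)), ∫ σ in B n u t, g n u κ (t, σ) := by
  set c := u / (n+1) with hc
  set G := (D n u).indicator (g n u κ) with hG
  have hslice : ∀ t : ℝ, 1 ≤ t → (fun σ => G (t, σ)) = (B n u t).indicator fun σ => g n u κ (t, σ) := by
    intro t h1
    funext σ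
    simp only [hG]
    by_cases hσ : σ ∈ B n u t
    · rw [Set.indicator_of_mem (s := D n u) (show (t, σ) ∈ D n u from ⟨h1, hσ⟩),
        Set.indicator_of_mem (s := B n u t) hσ]
    · rw [Set.indicator_of_notMem (s := D n u) (show (t, σ) ∉ D n u from fun hp => hσ hp.2),
        Set.indicator_of_notMem (s := B n u t) hσ]
  have hzero : ∀ t : ℝ, t < 1 → (fun σ => G (t, σ)) = fun _ => (0:ℝ) := by
    intro t h1
    funext σ
    simp only [hG]
    rw [Set.indicator_of_notMem (s := D n u)
      (show (t, σ) ∉ D n u from fun hp => absurd hp.1 (not_le.2 h1))]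
  have step1 : ∫ p in D n u, g n u κ p = ∫ t : ℝ, ∫ σ, G (t, σ) := by
    rw [← integral_indicator measurableSet_D, ← hG]
    have h2 : Integrable G ((volume : Measure ℝ).prod (volume : Measure (Fin n → ℝ))) := by
      rw [← Measure.volume_eq_prod]; exact integrable_indicator_g hκ
    rw [Measure.volume_eq_prod]
    exact integral_prod G h2
  rw [step1]
  have step2 : ∫ t : ℝ, ∫ σ, G (t, σ)
      = ∫ t in Ioo (1:ℝ) c, ∫ σ, G (t, σ) := by
    refine (setIntegral_eq_integral_of_ae_compl_eq_zero ?_).symm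
    have hnm : ∀ᵐ t : ℝ, t ∉ ({1, c} : Set ℝ) :=
      measure_eq_zero_iff_ae_notMem.mp (((Set.countable_singleton c).insert 1).measure_zero _)
    filter_upwards [hnm] with t ht htIoo
    simp only [Set.mem_insert_iff, Set.mem_singleton_iff, not_or] at ht
    rcases not_and_or.mp htIoo with h | h
    · have h1 : t < 1 := lt_of_le_of_ne (not_lt.1 h) ht.1
      rw [hzero t h1]
      exact integral_zero _ _
    · have h2 : c < t := lt_of_le_of_ne (not_lt.1 h) (Ne.symm ht.2)
      have h1 : 1 ≤ t := le_trans hc1 (le_of_lt h2)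
      rw [hslice t h1, B_empty h2 h1]
      simp
  rw [step2]
  refine setIntegral_congr_fun measurableSet_Ioo fun t ht => ?_
  rw [hslice t (le_of_lt ht.1), integral_indicator measurableSet_B]

lemma smul_A (ht : 0 < t) : t • A n ((u - t) / t) = B n u t := by
  ext σ
  constructor
  · rintro ⟨x, ⟨hx1, hx2⟩, rfl⟩
    constructor
    · intro i
      show t ≤ t * x i
      exact le_mul_of_one_le_right ht.le (hx1 i)
    · show t + ∑ i, t * x i ≤ u
      rw [← Finset.mul_sum]
      rw [le_div_iff₀ ht] at hx2
      linarith
  · rintro ⟨h1, h2⟩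
    refine ⟨t⁻¹ • σ, ⟨fun i => ?_, ?_⟩, ?_⟩
    · show 1 ≤ t⁻¹ * σ i
      rw [inv_mul_eq_div, le_div_iff₀ ht]
      simpa using h1 i
    · show ∑ i, t⁻¹ * σ i ≤ (u - t) / t
      rw [← Finset.mul_sum, inv_mul_eq_div, div_le_div_iff_of_pos_right ht]
      linarith
    · exact smul_inv_smul₀ ht.ne' σ

lemma g_smul (hκ : 0 ≤ κ) (ht : 0 < t) {x : Fin n → ℝ} (hx : x ∈ A n ((u - t) / t)) :
    g n u κ (t, t • x) = (t ^ κ / t ^ (n + 1)) * F n ((u - t) / t) κ x := by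
  obtain ⟨hx1, hx2⟩ := hx
  have hpx : (0:ℝ) < ∏ i, x i := lt_of_lt_of_le zero_lt_one (one_le_prod hx1)
  have hsum : ∑ i, (t • x) i = t * ∑ i, x i := by
    simp [smul_eq_mul, Finset.mul_sum]
  have hprod : ∏ i, (t • x) i = t ^ n * ∏ i, x i := by
    simp [smul_eq_mul, Finset.prod_mul_distrib]
  have hnum : u - (t + t * ∑ i, x i) = t * ((u - t) / t - ∑ i, x i) := by
    field_simp
    ring
  show (u - (t + ∑ i, (t • x) i)) ^ κ / (t * ∏ i, (t • x) i) = _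
  rw [hsum, hprod, hnum, Real.mul_rpow ht.le (sub_nonneg.2 hx2), F]
  have htκ : (0:ℝ) < t ^ κ := Real.rpow_pos_of_pos ht κ
  have htn : (0:ℝ) < t ^ n := pow_pos ht n
  generalize ((u - t) / t - ∑ i, x i) ^ κ = a
  rw [div_mul_div_comm]
  congr 1
  ring

lemma scaling (hκ : 0 ≤ κ) (ht : 0 < t) :
    ∫ σ in B n u t, g n u κ (t, σ)
      = t ^ (κ - 1) * ∫ x in A n ((u - t) / t), F n ((u - t) / t) κ x := by
  have key := Measure.setIntegral_comp_smul_of_pos volume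
    (fun σ : Fin n → ℝ => g n u κ (t, σ)) (A n ((u - t) / t)) ht
  rw [smul_A ht] at key
  rw [Module.finrank_fin_fun ℝ] at key
  have hLHS : ∫ x in A n ((u - t) / t), g n u κ (t, t • x)
      = (t ^ κ / t ^ (n + 1)) * ∫ x in A n ((u - t) / t), F n ((u - t) / t) κ x := by
    rw [← integral_const_mul]
    exact setIntegral_congr_fun measurableSet_A fun x hx => g_smul hκ ht hx
  rw [hLHS, smul_eq_mul] at key
  have htn : (0:ℝ) < t ^ n := pow_pos ht n
  have htκ : (0:ℝ) < t ^ κ := Real.rpow_pos_of_pos ht κ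
  have hrw : t ^ (κ - 1) = t ^ κ / t := by
    rw [Real.rpow_sub ht, Real.rpow_one]
  -- key : t^κ/t^(n+1) * I = (t^n)⁻¹ * ∫_B
  have := key.symm
  rw [hrw]
  field_simp at this ⊢
  rw [pow_succ] at this
  nlinarith [this]

lemma image_Ioo (hu : (n:ℝ) + 1 ≤ u) :
    (fun t : ℝ => u / t) '' Ioo 1 (u / ((n:ℝ)+1)) = Ioo ((n:ℝ)+1) u := by
  have hn1 : (0:ℝ) < (n:ℝ) + 1 := by positivity
  have hu0 : (0:ℝ) < u := lt_of_lt_of_le hn1 hu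
  ext v
  constructor
  · rintro ⟨s, ⟨hs1, hsc⟩, rfl⟩
    have hs0 : 0 < s := lt_trans zero_lt_one hs1
    rw [lt_div_iff₀ hn1] at hsc
    constructor
    · rw [lt_div_iff₀ hs0]; nlinarith
    · rw [div_lt_iff₀ hs0]; nlinarith
  · rintro ⟨hv1, hv2⟩
    have hv0 : 0 < v := lt_trans hn1 hv1
    refine ⟨u / v, ⟨?_, ?_⟩, ?_⟩
    · rw [lt_div_iff₀ hv0]; linarith
    · rw [div_lt_div_iff₀ hv0 hn1]; nlinarith
    · field_simp
lemma hasDeriv_div (hc : (0:ℝ) < 1) :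
    ∀ s ∈ Ioo (1:ℝ) (u / ((n:ℝ)+1)), HasDerivWithinAt (fun s : ℝ => u / s)
      (-(u / s^2)) (Ioo (1:ℝ) (u / ((n:ℝ)+1))) s := by
  intro s hs
  have hs0 : s ≠ 0 := (lt_trans zero_lt_one hs.1).ne'
  have := ((hasDerivAt_inv hs0).const_mul u).hasDerivWithinAt
    (s := Ioo (1:ℝ) (u / ((n:ℝ)+1)))
  simpa [div_eq_mul_inv] using this

lemma injOn_div (hu0 : (0:ℝ) < u) :
    Set.InjOn (fun s : ℝ => u / s) (Ioo (1:ℝ) (u / ((n:ℝ)+1))) := by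
  intro a ha b hb h
  have ha0 : (0:ℝ) < a := lt_trans zero_lt_one ha.1
  have hb0 : (0:ℝ) < b := lt_trans zero_lt_one hb.1
  simp only at h
  rw [div_eq_div_iff ha0.ne' hb0.ne'] at h
  exact mul_left_cancel₀ hu0.ne' (by linarith [h])

lemma cov (hu : (n:ℝ) + 1 ≤ u) :
    ∫ v in Ioo ((n:ℝ)+1) u, ((v-1) ^ κ / v ^ (κ+1) * J n (v-1) κ)
      = ∫ s in Ioo (1:ℝ) (u / ((n:ℝ)+1)),
          |(-(u / s^2))| • ((u/s - 1) ^ κ / (u/s) ^ (κ+1) * J n (u/s - 1) κ) := by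
  have hu0 : (0:ℝ) < u := lt_of_lt_of_le (by positivity) hu
  rw [← image_Ioo hu]
  exact integral_image_eq_integral_abs_deriv_smul measurableSet_Ioo
    (hasDeriv_div zero_lt_one) (injOn_div hu0) _

lemma main (κ : ℝ) (hκ : 0 ≤ κ) : ∀ n : ℕ, ∀ u : ℝ, (n : ℝ) ≤ u → u ^ κ * J n u κ = K n u κ := by
  intro n
  induction n with
  | zero =>
    intro u hu0
    simp only [Nat.cast_zero] at hu0
    rw [K_eq]
    have hA : A 0 u = Set.univ := by
      ext σ
      simp [A, hu0]
    have hF : F 0 u κ = fun _ : Fin 0 → ℝ => u ^ κ := by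
      funext σ; simp [F]
    rw [hA, hF, Measure.restrict_univ, integral_const]
    have hvol : (volume : Measure (Fin 0 → ℝ)) Set.univ = 1 := by
      rw [MeasureTheory.volume_pi, Measure.pi_univ]
      simp
    rw [measureReal_def, hvol]
    show u ^ κ * J 0 u κ = _
    rw [show J 0 u κ = 1 from rfl]
    simp
  | succ n ih =>
    intro u hu
    push_cast at hu
    have hn1 : (0:ℝ) < (n:ℝ) + 1 := by positivity
    have hu0 : (0:ℝ) < u := lt_of_lt_of_le hn1 hu
    have hc1 : (1:ℝ) ≤ u / ((n:ℝ)+1) := (one_le_div hn1).2 hu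
    have hfac : ((n.factorial : ℝ)) ≠ 0 := Nat.cast_ne_zero.2 n.factorial_ne_zero
    have hJdef : J (n+1) u κ = ∫ v in ((n : ℝ) + 1)..u, (v - 1) ^ κ / v ^ (κ + 1) * J n (v - 1) κ := rfl
    have hpt : ∀ s ∈ Ioo (1:ℝ) (u / ((n:ℝ)+1)),
        u ^ κ * (|(-(u / s^2))| • ((u/s - 1) ^ κ / (u/s) ^ (κ+1) * J n (u/s - 1) κ))
          = ((n.factorial : ℝ))⁻¹ * ∫ σ in B n u s, g n u κ (s, σ) := by
      intro s hs
      obtain ⟨hs1, hsc⟩ := hs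
      have hs0 : (0:ℝ) < s := lt_trans zero_lt_one hs1
      have hw : u / s - 1 = (u - s) / s := by field_simp
      have hwn : (n:ℝ) ≤ (u - s) / s := by
        rw [le_div_iff₀ hs0]
        rw [lt_div_iff₀ hn1] at hsc
        nlinarith
      have hih := ih ((u - s)/s) hwn
      have hKA : ∫ x in A n ((u-s)/s), F n ((u-s)/s) κ x
          = (n.factorial : ℝ) * K n ((u-s)/s) κ := by
        rw [K_eq]
        field_simp
      have hsc2 := scaling (n := n) (u := u) (t := s) hκ hs0
      rw [hsc2, hKA, ← hih]
      have habs : |(-(u / s^2))| = u / s^2 := by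
        rw [abs_neg, abs_of_nonneg (by positivity)]
      rw [habs, smul_eq_mul, hw]
      have e1 : (u/s) ^ (κ+1) = (u ^ κ * u) / (s ^ κ * s) := by
        rw [Real.div_rpow hu0.le hs0.le, Real.rpow_add hu0, Real.rpow_one,
          Real.rpow_add hs0, Real.rpow_one]
      have e2 : s ^ (κ-1) = s ^ κ / s := by
        rw [Real.rpow_sub hs0, Real.rpow_one]
      rw [e1, e2]
      have hUκ : u ^ κ ≠ 0 := (Real.rpow_pos_of_pos hu0 κ).ne'
      have hSκ : s ^ κ ≠ 0 := (Real.rpow_pos_of_pos hs0 κ).ne'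
      field_simp
    calc u ^ κ * J (n+1) u κ
        = u ^ κ * ∫ v in Ioo ((n:ℝ)+1) u, (v - 1) ^ κ / v ^ (κ + 1) * J n (v - 1) κ := by
          rw [hJdef, intervalIntegral.integral_of_le hu, integral_Ioc_eq_integral_Ioo]
      _ = ∫ s in Ioo (1:ℝ) (u / ((n:ℝ)+1)),
            u ^ κ * (|(-(u / s^2))| • ((u/s - 1) ^ κ / (u/s) ^ (κ+1) * J n (u/s - 1) κ)) := by
          rw [cov hu, ← integral_const_mul]
      _ = ∫ s in Ioo (1:ℝ) (u / ((n:ℝ)+1)),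
            ((n.factorial : ℝ))⁻¹ * ∫ σ in B n u s, g n u κ (s, σ) := by
          exact setIntegral_congr_fun measurableSet_Ioo fun s hs => hpt s hs
      _ = ((n.factorial : ℝ))⁻¹ * ∫ s in Ioo (1:ℝ) (u / ((n:ℝ)+1)),
            ∫ σ in B n u s, g n u κ (s, σ) := by
          rw [integral_const_mul]
      _ = ((n.factorial : ℝ))⁻¹ * ∫ p in D n u, g n u κ p := by
          rw [fubini hκ hc1]
      _ = ((n.factorial : ℝ))⁻¹ * ∫ σ in M n u, F (n+1) u κ σ := by
          rw [D_to_M]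
      _ = K (n+1) u κ := by
          rw [K_eq]
          have hsym := sym (n := n) (u := u) (κ := κ) hκ
          have hfac2 : (((n+1).factorial : ℝ)) = ((n:ℝ)+1) * (n.factorial : ℝ) := by
            rw [Nat.factorial_succ]
            push_cast
            ring
          rw [hfac2, hsym]
          field_simp

end Stmt11

theorem stmt_11 (ℓ : ℕ) (hℓ : 1 ≤ ℓ) (κ : ℝ) (hκ : 0 ≤ κ) (u : ℝ) (hu : (ℓ : ℝ) ≤ u) :
    u ^ κ * J ℓ u κ = K ℓ u κ := by
  exact Stmt11.main κ hκ ℓ u hu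
end
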